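/- Fix an integer r ≥ 1. Then u(d,r) ~ (log d / (r·d))^{1/r} as d → ∞; that is, u(d,r)·(r·d/ log d)^{1/r} → 1 as d → ∞. -/

import Mathlib

open Filter Real


private lemma choose_id (m j : ℕ) :
    (m + j + 1).choose j * (m + 1) = (m + j + 1).choose (j + 1) * (j + 1) := by
  have h1 : (m + j + 1).choose j = (m + j + 1).choose (m + 1) := by
    rw [← Nat.choose_symm (by omega : m + 1 ≤ m + j + 1)]; congr 1; omega
  have h2 : (m + j + 1).choose (j + 1) = (m + j + 1).choose m := by
    rw [← Nat.choose_symm (by omega : m ≤ m + j + 1)]; congr 1; omega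
  rw [h1, h2, Nat.choose_succ_right_eq]; congr 1; omega

private lemma key_ineq (r d : ℕ) (hr : 1 ≤ r) (hd : 3 ≤ d) (u : ℝ) (hu0 : 0 < u)
    (hsum : Summable (fun m : ℕ =>
        ((m + d - 2).choose (d - 2) : ℝ) * u ^ (r * m + 1) / (r * m + 1)))
    (hts : ∑' m : ℕ, ((m + d - 2).choose (d - 2) : ℝ) * u ^ (r * m + 1) / (r * m + 1) = 1) :
    u < 1 ∧ (1 - u ^ r) ^ (d - 1) ≤ u ∧
      ((1 - u ^ r)⁻¹) ^ (d - 2) ≤ 1 + (r : ℝ) * ((d : ℝ) - 2) * u ^ (r - 1) := by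
  have hr0 : ((r : ℝ)) ≠ 0 := by positivity
  set f : ℕ → ℝ := fun m => ((m + d - 2).choose (d - 2) : ℝ) * u ^ (r * m + 1) / (r * m + 1)
    with hf
  have hfnonneg : ∀ m, 0 ≤ f m := by
    intro m
    apply div_nonneg (mul_nonneg (by positivity) (by positivity)) (by positivity)
  -- u < 1
  have hu1 : u < 1 := by
    have h01 : ∑ m ∈ Finset.range 2, f m ≤ 1 := by
      rw [← hts]; exact Summable.sum_le_tsum _ (fun m _ => hfnonneg m) hsum
    have hf0 : f 0 = u := by
      simp [hf, Nat.choose_self]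
    have hf1 : 0 < f 1 := by
      have h1 : 0 < ((1 + d - 2).choose (d - 2) : ℝ) := by
        have : d - 2 ≤ 1 + d - 2 := by omega
        exact_mod_cast Nat.cast_pos.mpr (Nat.choose_pos this)
      apply div_pos (mul_pos h1 (by positivity)) (by positivity)
    rw [Finset.sum_range_succ, Finset.sum_range_one, hf0] at h01
    linarith
  set x : ℝ := u ^ r with hxdef
  have hx0 : 0 < x := by positivity
  have hx1 : x < 1 := pow_lt_one₀ hu0.le hu1 (by omega)
  have h1x : 0 < 1 - x := by linarith
  have hux : ∀ m : ℕ, u ^ (r * m + 1) = u * x ^ m := by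
    intro m
    rw [hxdef, ← pow_mul, ← pow_succ']
  have hmdcast : ∀ m : ℕ, (m + d - 2).choose (d - 2) = (m + (d - 2)).choose (d - 2) := by
    intro m; congr 1; omega
  refine ⟨hu1, ?_, ?_⟩
  · -- inequality (A)
    have hgeo : HasSum (fun m : ℕ => ((m + (d - 2)).choose (d - 2) : ℝ) * x ^ m)
        (1 / (1 - x) ^ ((d - 2) + 1)) :=
      hasSum_choose_mul_geometric_of_norm_lt_one (d - 2)
        (by rw [Real.norm_eq_abs, abs_lt]; constructor <;> linarith)
    have hgeo' : HasSum (fun m : ℕ => u * (((m + (d - 2)).choose (d - 2) : ℝ) * x ^ m))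
        (u * (1 / (1 - x) ^ ((d - 2) + 1))) := hgeo.mul_left u
    have hle : (1 : ℝ) ≤ u * (1 / (1 - x) ^ ((d - 2) + 1)) := by
      have hterm : ∀ m, f m ≤ u * (((m + (d - 2)).choose (d - 2) : ℝ) * x ^ m) := by
        intro m
        have h1 : f m ≤ ((m + d - 2).choose (d - 2) : ℝ) * u ^ (r * m + 1) := by
          apply div_le_self (by positivity)
          have : (0:ℝ) ≤ (r:ℝ) * m := by positivity
          linarith
        refine h1.trans (le_of_eq ?_)
        rw [hmdcast m, hux m]; ring
      have h := Summable.tsum_le_tsum hterm hsum hgeo'.summable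
      rw [hts, hgeo'.tsum_eq] at h
      exact h
    have hppos : 0 < (1 - x) ^ ((d - 2) + 1) := by positivity
    rw [mul_one_div, le_div_iff₀ hppos] at hle
    have hde : d - 2 + 1 = d - 1 := by omega
    rw [hde] at hle
    linarith
  · -- inequality (B)
    set j := d - 3 with hj
    set g : ℕ → ℝ := fun m => ((m + d - 2).choose (d - 2) : ℝ) * u ^ (r * m + 1)
        / ((r : ℝ) * (m + 1)) with hg
    have hgnonneg : ∀ m, 0 ≤ g m := by
      intro m
      apply div_nonneg (mul_nonneg (by positivity) (by positivity)) (by positivity)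
    have hgle : ∀ m, g m ≤ f m := by
      intro m
      apply div_le_div_of_nonneg_left (mul_nonneg (by positivity) (by positivity))
        (by positivity)
      have h1 : (1:ℝ) ≤ (r:ℝ) := by exact_mod_cast hr
      have h0 : (0:ℝ) ≤ (m:ℝ) := by positivity
      nlinarith
    have hgsum : Summable g := Summable.of_nonneg_of_le hgnonneg hgle hsum
    have h0 : HasSum (fun n : ℕ => ((n + j).choose j : ℝ) * x ^ n)
        (1 / (1 - x) ^ (j + 1)) :=
      hasSum_choose_mul_geometric_of_norm_lt_one j
        (by rw [Real.norm_eq_abs, abs_lt]; constructor <;> linarith)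
    have h1 : HasSum (fun n : ℕ => (((n + 1) + j).choose j : ℝ) * x ^ (n + 1))
        (1 / (1 - x) ^ (j + 1) - 1) := by
      rw [hasSum_nat_add_iff (f := fun n : ℕ => ((n + j).choose j : ℝ) * x ^ n) 1]
      simpa using h0
    have hgeq : g = fun n : ℕ =>
        (u / ((r : ℝ) * ((j : ℝ) + 1) * x)) * ((((n + 1) + j).choose j : ℝ) * x ^ (n + 1)) := by
      funext m
      have hc := choose_id m j
      have hcr : ((m + j + 1).choose j : ℝ) * ((m : ℝ) + 1)
          = ((m + j + 1).choose (j + 1) : ℝ) * ((j : ℝ) + 1) := by exact_mod_cast hc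
      rw [hg]
      simp only
      rw [hux m, show m + d - 2 = m + j + 1 from by omega,
        show d - 2 = j + 1 from by omega, show m + 1 + j = m + j + 1 from by omega, pow_succ]
      have hm1 : ((m : ℝ) + 1) ≠ 0 := by positivity
      have hj1 : ((j : ℝ) + 1) ≠ 0 := by positivity
      have hxne : x ≠ 0 := ne_of_gt hx0
      field_simp
      first
      | linear_combination (u * x ^ m * x * (r : ℝ)) * hcr
      | linear_combination (-(u * x ^ m * x * (r : ℝ))) * hcr
      | nlinarith [hcr]
    have h2 : HasSum g
        ((u / ((r : ℝ) * ((j : ℝ) + 1) * x)) * (1 / (1 - x) ^ (j + 1) - 1)) := by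
      rw [hgeq]
      exact h1.mul_left _
    have hle : (u / ((r : ℝ) * ((j : ℝ) + 1) * x)) * (1 / (1 - x) ^ (j + 1) - 1) ≤ 1 := by
      rw [← h2.tsum_eq, ← hts]
      exact Summable.tsum_le_tsum hgle hgsum hsum
    -- rearrange
    have hc0 : 0 < (r : ℝ) * ((j : ℝ) + 1) * x := by positivity
    have hS1 : 1 / (1 - x) ^ (j + 1) - 1 ≤ (r : ℝ) * ((j : ℝ) + 1) * x / u := by
      have h : u * (1 / (1 - x) ^ (j + 1) - 1) ≤ (r : ℝ) * ((j : ℝ) + 1) * x := by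
        rw [div_mul_eq_mul_div, div_le_one hc0] at hle
        exact hle
      rw [le_div_iff₀ hu0]
      nlinarith [h]
    have hcast : (j : ℝ) + 1 = (d : ℝ) - 2 := by
      rw [hj, Nat.cast_sub hd]
      push_cast
      ring
    have hxu : x = u ^ (r - 1) * u := by
      rw [hxdef, ← pow_succ]
      congr 1
      omega
    have hcu : (r : ℝ) * ((j : ℝ) + 1) * x / u = (r : ℝ) * ((d : ℝ) - 2) * u ^ (r - 1) := by
      rw [← hcast, hxu]
      field_simp
    have e4 : ((1 - x)⁻¹) ^ (d - 2) = 1 / (1 - x) ^ (j + 1) := by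
      rw [inv_pow, one_div, show d - 2 = j + 1 from by omega]
    rw [e4]
    rw [hcu] at hS1
    linarith

private lemma key_log (r d : ℕ) (hr : 1 ≤ r) (hd : 3 ≤ d) (u : ℝ) (hu0 : 0 < u) (hu1 : u < 1)
    (hA : (1 - u ^ r) ^ (d - 1) ≤ u)
    (hB : ((1 - u ^ r)⁻¹) ^ (d - 2) ≤ 1 + (r : ℝ) * ((d : ℝ) - 2) * u ^ (r - 1)) :
    -Real.log u ≤ ((d : ℝ) - 1) * u ^ r / (1 - u ^ r) ∧
      ((d : ℝ) - 2) * u ^ r ≤ Real.log (1 + (r : ℝ) * ((d : ℝ) - 2) * u ^ (r - 1)) := by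
  set x : ℝ := u ^ r with hxdef
  have hx0 : 0 < x := by positivity
  have hx1 : x < 1 := pow_lt_one₀ hu0.le hu1 (by omega)
  have h1x : 0 < 1 - x := by linarith
  have hlog1 : Real.log (1 - x) ≤ -x := by
    have := Real.log_le_sub_one_of_pos h1x; linarith
  have hlog2 : -Real.log (1 - x) ≤ x / (1 - x) := by
    have h := Real.log_le_sub_one_of_pos (inv_pos.2 h1x)
    rw [Real.log_inv] at h
    have e : (1 - x)⁻¹ - 1 = x / (1 - x) := by field_simp; ring
    linarith
  have hd1cast : ((d - 1 : ℕ) : ℝ) = (d : ℝ) - 1 := by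
    rw [Nat.cast_sub (by omega)]; norm_num
  have hd2cast : ((d - 2 : ℕ) : ℝ) = (d : ℝ) - 2 := by
    rw [Nat.cast_sub (by omega)]; norm_num
  constructor
  · have h := Real.log_le_log (pow_pos h1x (d - 1)) hA
    rw [Real.log_pow, hd1cast] at h
    have hd1 : (0 : ℝ) ≤ (d : ℝ) - 1 := by
      have : (3 : ℝ) ≤ (d : ℝ) := by exact_mod_cast hd
      linarith
    linarith [mul_le_mul_of_nonneg_left hlog2 hd1, mul_div_assoc ((d:ℝ)-1) x (1-x)]
  · have h := Real.log_le_log (pow_pos (inv_pos.2 h1x) (d - 2)) hB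
    rw [Real.log_pow, Real.log_inv, hd2cast] at h
    have hd2 : (0 : ℝ) ≤ (d : ℝ) - 2 := by
      have : (3 : ℝ) ≤ (d : ℝ) := by exact_mod_cast hd
      linarith
    nlinarith [mul_le_mul_of_nonneg_left hlog1 hd2]

private lemma lim_log_ratio (a b : ℝ) (ha : 0 < a) :
    Tendsto (fun d : ℕ => Real.log (a * d + b) / Real.log d) atTop (nhds 1) := by
  have hcast : Tendsto (fun d : ℕ => (d : ℝ)) atTop atTop := tendsto_natCast_atTop_atTop
  have hlogd : Tendsto (fun d : ℕ => Real.log d) atTop atTop :=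
    Real.tendsto_log_atTop.comp hcast
  have hbd : Tendsto (fun d : ℕ => b / (d : ℝ)) atTop (nhds 0) :=
    Tendsto.div_atTop tendsto_const_nhds hcast
  have habd : Tendsto (fun d : ℕ => a + b / (d : ℝ)) atTop (nhds a) := by
    simpa using tendsto_const_nhds.add hbd
  have hlab : Tendsto (fun d : ℕ => Real.log (a + b / (d : ℝ))) atTop (nhds (Real.log a)) :=
    (Real.continuousAt_log (ne_of_gt ha)).tendsto.comp habd
  have h2 : Tendsto (fun d : ℕ => 1 + Real.log (a + b / (d : ℝ)) / Real.log d)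
      atTop (nhds 1) := by
    simpa using tendsto_const_nhds.add (hlab.div_atTop hlogd)
  refine Tendsto.congr' ?_ h2
  filter_upwards [habd.eventually (eventually_gt_nhds ha), eventually_ge_atTop 2] with d hpos hd2
  have hdR : (1 : ℝ) < (d : ℝ) := by exact_mod_cast Nat.lt_of_lt_of_le one_lt_two hd2
  have hd0 : (0 : ℝ) < (d : ℝ) := by linarith
  have hlogdpos : 0 < Real.log d := Real.log_pos hdR
  have he : a * d + b = (d : ℝ) * (a + b / d) := by field_simp
  rw [he, Real.log_mul (ne_of_gt hd0) (ne_of_gt hpos), add_div, div_self (ne_of_gt hlogdpos)]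

private lemma lim_loglog (c : ℝ) (hc : 1 ≤ c) :
    Tendsto (fun d : ℕ => Real.log (Real.log (1 + c * ((d : ℝ) - 2))) / Real.log d)
      atTop (nhds 0) := by
  have hc0 : 0 < c := lt_of_lt_of_le one_pos hc
  have hT1 : Tendsto (fun d : ℕ => 1 + c * ((d : ℝ) - 2)) atTop atTop := by
    apply tendsto_atTop_add_const_left
    exact Tendsto.const_mul_atTop hc0
      (tendsto_atTop_add_const_right _ _ tendsto_natCast_atTop_atTop)
  have hT : Tendsto (fun d : ℕ => Real.log (1 + c * ((d : ℝ) - 2))) atTop atTop :=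
    Real.tendsto_log_atTop.comp hT1
  have h1 : Tendsto (fun d : ℕ =>
      Real.log (Real.log (1 + c * ((d : ℝ) - 2))) / Real.log (1 + c * ((d : ℝ) - 2)))
      atTop (nhds 0) :=
    Real.isLittleO_log_id_atTop.tendsto_div_nhds_zero.comp hT
  have h2 : Tendsto (fun d : ℕ => Real.log (1 + c * ((d : ℝ) - 2)) / Real.log d)
      atTop (nhds 1) := by
    refine (lim_log_ratio c (1 - 2 * c) hc0).congr (fun d => ?_)
    rw [show c * (d : ℝ) + (1 - 2 * c) = 1 + c * ((d : ℝ) - 2) from by ring]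
  have h3 := h1.mul h2
  rw [zero_mul] at h3
  refine Tendsto.congr' ?_ h3
  filter_upwards [hT.eventually_gt_atTop 0] with d hTd
  rw [div_mul_div_cancel₀]
  exact ne_of_gt hTd

private lemma lim_X (c : ℝ) (hc : 1 ≤ c) :
    Tendsto (fun d : ℕ => Real.log (1 + c * ((d : ℝ) - 2)) / ((d : ℝ) - 2))
      atTop (nhds 0) := by
  have hc0 : 0 < c := lt_of_lt_of_le one_pos hc
  have ht : Tendsto (fun d : ℕ => (d : ℝ) - 2) atTop atTop :=
    tendsto_atTop_add_const_right _ _ tendsto_natCast_atTop_atTop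
  have hT1 : Tendsto (fun d : ℕ => 1 + c * ((d : ℝ) - 2)) atTop atTop := by
    apply tendsto_atTop_add_const_left
    exact Tendsto.const_mul_atTop hc0 ht
  have h1 : Tendsto (fun d : ℕ =>
      Real.log (1 + c * ((d : ℝ) - 2)) / (1 + c * ((d : ℝ) - 2))) atTop (nhds 0) :=
    Real.isLittleO_log_id_atTop.tendsto_div_nhds_zero.comp hT1
  have h2 : Tendsto (fun d : ℕ => (1 + c * ((d : ℝ) - 2)) / ((d : ℝ) - 2))
      atTop (nhds c) := by
    have h2a : Tendsto (fun d : ℕ => ((d : ℝ) - 2)⁻¹ + c) atTop (nhds c) := by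
      have := (Tendsto.div_atTop (tendsto_const_nhds (x := (1:ℝ))) ht).add
        (tendsto_const_nhds (x := c))
      rw [zero_add] at this
      refine this.congr (fun d => ?_)
      rw [one_div]
    refine Tendsto.congr' ?_ h2a
    filter_upwards [eventually_ge_atTop 3] with d hd3
    have ht0 : ((d : ℝ) - 2) ≠ 0 := by
      have : (3 : ℝ) ≤ (d : ℝ) := by exact_mod_cast hd3
      intro h; linarith [h]
    field_simp
  have h3 := h1.mul h2
  rw [zero_mul] at h3
  refine Tendsto.congr' ?_ h3
  filter_upwards [hT1.eventually_gt_atTop 0] with d hTd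
  rw [div_mul_div_cancel₀]
  exact ne_of_gt hTd

private lemma lim_ratio (a : ℝ) :
    Tendsto (fun d : ℕ => (d : ℝ) / ((d : ℝ) - a)) atTop (nhds 1) := by
  have ht : Tendsto (fun d : ℕ => (d : ℝ) - a) atTop atTop :=
    tendsto_atTop_add_const_right _ _ tendsto_natCast_atTop_atTop
  have h : Tendsto (fun d : ℕ => 1 + a / ((d : ℝ) - a)) atTop (nhds 1) := by
    simpa using (tendsto_const_nhds (x := (1 : ℝ))).add
      (Tendsto.div_atTop (tendsto_const_nhds (x := a)) ht)
  refine Tendsto.congr' ?_ h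
  filter_upwards [ht.eventually_gt_atTop 0] with d h0
  field_simp
  ring

theorem u_asymptotics (r : ℕ) (hr : 1 ≤ r) (u : ℕ → ℝ)
    (hu : ∀ d : ℕ, 2 ≤ d → 0 < u d ∧
      Summable (fun m : ℕ =>
        ((m + d - 2).choose (d - 2) : ℝ) * u d ^ (r * m + 1) / (r * m + 1)) ∧
      ∑' m : ℕ, ((m + d - 2).choose (d - 2) : ℝ) * u d ^ (r * m + 1) / (r * m + 1) = 1) :
    Filter.Tendsto (fun d : ℕ => u d * (((r : ℝ) * d / Real.log d) ^ ((1 : ℝ) / r)))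
      Filter.atTop (nhds 1) := by
  have hc1 : (1 : ℝ) ≤ (r : ℝ) := by exact_mod_cast hr
  have hc0 : (0 : ℝ) < (r : ℝ) := lt_of_lt_of_le one_pos hc1
  set e : ℝ := ((r : ℝ) - 1) / (r : ℝ) with hedef
  have he0 : 0 ≤ e := div_nonneg (by linarith) hc0.le
  set x : ℕ → ℝ := fun d => u d ^ r with hxdef
  set X : ℕ → ℝ := fun d => Real.log (1 + (r : ℝ) * ((d : ℝ) - 2)) / ((d : ℝ) - 2) with hXdef
  set W : ℕ → ℝ := fun d => (r : ℝ) * ((d : ℝ) - 2) * X d ^ e with hWdef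
  set F : ℕ → ℝ := fun d => (r : ℝ) * (d : ℝ) / Real.log d with hFdef
  set Ub : ℕ → ℝ := fun d => Real.log (1 + W d) / ((d : ℝ) - 2) with hUbdef
  set Lb : ℕ → ℝ := fun d => (1 - X d) * (-Real.log (X d) / (r : ℝ)) / ((d : ℝ) - 1) with hLbdef
  have hcast : Tendsto (fun d : ℕ => (d : ℝ)) atTop atTop := tendsto_natCast_atTop_atTop
  have ht : Tendsto (fun d : ℕ => (d : ℝ) - 2) atTop atTop :=
    tendsto_atTop_add_const_right _ _ hcast
  have hlogd : Tendsto (fun d : ℕ => Real.log d) atTop atTop :=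
    Real.tendsto_log_atTop.comp hcast
  have hT : Tendsto (fun d : ℕ => Real.log (1 + (r : ℝ) * ((d : ℝ) - 2))) atTop atTop := by
    apply Real.tendsto_log_atTop.comp
    apply tendsto_atTop_add_const_left
    exact Tendsto.const_mul_atTop hc0 ht
  -- per-d data
  have hdata : ∀ᶠ d : ℕ in atTop, 0 < u d ∧ u d < 1 ∧
      (-Real.log (u d) ≤ ((d : ℝ) - 1) * x d / (1 - x d)) ∧
      (((d : ℝ) - 2) * x d ≤ Real.log (1 + (r : ℝ) * ((d : ℝ) - 2) * u d ^ (r - 1))) ∧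
      x d < 1 ∧ 0 < x d := by
    filter_upwards [eventually_ge_atTop 3] with d hd3
    obtain ⟨h0, h1, h2⟩ := hu d (by omega)
    obtain ⟨hu1, hA, hB⟩ := key_ineq r d hr hd3 (u d) h0 h1 h2
    obtain ⟨hA1, hB1⟩ := key_log r d hr hd3 (u d) h0 hu1 hA hB
    exact ⟨h0, hu1, hA1, hB1, pow_lt_one₀ h0.le hu1 (by omega), by positivity⟩
  have hXpos : ∀ᶠ d : ℕ in atTop, 0 < X d := by
    filter_upwards [eventually_ge_atTop 3] with d hd3
    have ht3 : (3 : ℝ) ≤ (d : ℝ) := by exact_mod_cast hd3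
    have ht0 : (0 : ℝ) < (d : ℝ) - 2 := by linarith
    have h1 : 1 < 1 + (r : ℝ) * ((d : ℝ) - 2) := by nlinarith
    exact div_pos (Real.log_pos h1) ht0
  have hX0 : Tendsto X atTop (nhds 0) := lim_X (r : ℝ) hc1
  have hXhalf : ∀ᶠ d : ℕ in atTop, X d < 1 / 2 := hX0.eventually_lt_const (by norm_num)
  have hc1' : Tendsto (fun d : ℕ => Real.log ((d : ℝ) - 2) / Real.log d) atTop (nhds 1) := by
    refine (lim_log_ratio 1 (-2) one_pos).congr (fun d => ?_)
    rw [one_mul, ← sub_eq_add_neg]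
  have hc2 : Tendsto (fun d : ℕ =>
      Real.log (Real.log (1 + (r : ℝ) * ((d : ℝ) - 2))) / Real.log d) atTop (nhds 0) :=
    lim_loglog _ hc1
  have hmlogX : Tendsto (fun d : ℕ => -Real.log (X d) / Real.log d) atTop (nhds 1) := by
    have h := hc1'.sub hc2
    rw [sub_zero] at h
    refine Tendsto.congr' ?_ h
    filter_upwards [eventually_ge_atTop 3, hT.eventually_gt_atTop 0] with d hd3 hTd
    have ht3 : (3 : ℝ) ≤ (d : ℝ) := by exact_mod_cast hd3
    have ht0 : (0 : ℝ) < (d : ℝ) - 2 := by linarith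
    simp only [hXdef]
    rw [Real.log_div (ne_of_gt hTd) (ne_of_gt ht0)]
    ring
  have hlogW : Tendsto (fun d : ℕ => Real.log (W d) / Real.log d) atTop
      (nhds (1 / (r : ℝ))) := by
    have h := ((tendsto_const_nhds (x := Real.log (r : ℝ))).div_atTop hlogd).add
      (hc1'.add ((hc2.const_mul e).sub (hc1'.const_mul e)))
    have hval : (0 : ℝ) + (1 + (e * 0 - e * 1)) = 1 / (r : ℝ) := by
      rw [hedef]; field_simp; ring
    rw [hval] at h
    refine Tendsto.congr' ?_ h
    filter_upwards [eventually_ge_atTop 3, hT.eventually_gt_atTop 0, hXpos] with d hd3 hTd hXp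
    have ht3 : (3 : ℝ) ≤ (d : ℝ) := by exact_mod_cast hd3
    have ht0 : (0 : ℝ) < (d : ℝ) - 2 := by linarith
    have hXe : 0 < X d ^ e := Real.rpow_pos_of_pos hXp e
    simp only [hWdef]
    rw [Real.log_mul (by positivity) (ne_of_gt hXe), Real.log_mul (ne_of_gt hc0) (ne_of_gt ht0),
      Real.log_rpow hXp]
    simp only [hXdef]
    rw [Real.log_div (ne_of_gt hTd) (ne_of_gt ht0)]
    ring
  have hWpos : ∀ᶠ d : ℕ in atTop, 0 < W d := by
    filter_upwards [eventually_ge_atTop 3, hXpos] with d hd3 hXp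
    have ht3 : (3 : ℝ) ≤ (d : ℝ) := by exact_mod_cast hd3
    have ht0 : (0 : ℝ) < (d : ℝ) - 2 := by linarith
    simp only [hWdef]
    exact mul_pos (mul_pos hc0 ht0) (Real.rpow_pos_of_pos hXp e)
  have hWtop : Tendsto W atTop atTop := by
    have h1 : Tendsto (fun d : ℕ => Real.log (W d)) atTop atTop := by
      have h := Tendsto.pos_mul_atTop (by positivity : (0 : ℝ) < 1 / (r : ℝ)) hlogW hlogd
      refine Tendsto.congr' ?_ h
      filter_upwards [hlogd.eventually_gt_atTop 0] with d hld
      exact div_mul_cancel₀ _ (ne_of_gt hld)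
    have h2 := Real.tendsto_exp_atTop.comp h1
    refine Tendsto.congr' ?_ h2
    filter_upwards [hWpos] with d hWp
    exact Real.exp_log hWp
  have hlog1W : Tendsto (fun d : ℕ => Real.log (1 + W d) / Real.log d) atTop
      (nhds (1 / (r : ℝ))) := by
    have hup : Tendsto (fun d : ℕ => Real.log 2 / Real.log d + Real.log (W d) / Real.log d)
        atTop (nhds (1 / (r : ℝ))) := by
      have h := ((tendsto_const_nhds (x := Real.log 2)).div_atTop hlogd).add hlogW
      rwa [zero_add] at h
    refine tendsto_of_tendsto_of_tendsto_of_le_of_le' hlogW hup ?_ ?_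
    · filter_upwards [hWtop.eventually_ge_atTop 1, hlogd.eventually_gt_atTop 0] with d hW1 hld
      exact (div_le_div_iff_of_pos_right hld).mpr (Real.log_le_log (by linarith) (by linarith))
    · filter_upwards [hWtop.eventually_ge_atTop 1, hlogd.eventually_gt_atTop 0] with d hW1 hld
      have hW0 : (0 : ℝ) < W d := by linarith
      have hlog2 : Real.log (1 + W d) ≤ Real.log 2 + Real.log (W d) := by
        rw [← Real.log_mul two_ne_zero (ne_of_gt hW0)]
        exact Real.log_le_log (by linarith) (by nlinarith)
      rw [← add_div]
      exact (div_le_div_iff_of_pos_right hld).mpr hlog2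
  have hdd1 : Tendsto (fun d : ℕ => (d : ℝ) / ((d : ℝ) - 1)) atTop (nhds 1) := lim_ratio 1
  have hdd2 : Tendsto (fun d : ℕ => (d : ℝ) / ((d : ℝ) - 2)) atTop (nhds 1) := lim_ratio 2
  have T2 : Tendsto (fun d : ℕ => Ub d * F d) atTop (nhds 1) := by
    have ha : Tendsto (fun d : ℕ => (r : ℝ) * ((d : ℝ) / ((d : ℝ) - 2))) atTop
        (nhds ((r : ℝ) * 1)) := hdd2.const_mul (r : ℝ)
    have h := ha.mul hlog1W
    have hval : ((r : ℝ) * 1) * (1 / (r : ℝ)) = 1 := by field_simp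
    rw [hval] at h
    refine h.congr (fun d => ?_)
    simp only [hUbdef, hFdef]
    ring
  have T1 : Tendsto (fun d : ℕ => Lb d * F d) atTop (nhds 1) := by
    have h1X : Tendsto (fun d : ℕ => 1 - X d) atTop (nhds 1) := by
      have := (tendsto_const_nhds (x := (1 : ℝ))).sub hX0
      rwa [sub_zero] at this
    have ha := (h1X.mul hdd1).mul hmlogX
    rw [show ((1 : ℝ) * 1) * 1 = 1 from by norm_num] at ha
    refine Tendsto.congr' ?_ ha
    filter_upwards [eventually_ge_atTop 3, hlogd.eventually_gt_atTop 0] with d hd3 hld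
    have ht3 : (3 : ℝ) ≤ (d : ℝ) := by exact_mod_cast hd3
    have hd1 : ((d : ℝ) - 1) ≠ 0 := by intro h; linarith [h]
    have hldne : Real.log d ≠ 0 := ne_of_gt hld
    simp only [hLbdef, hFdef]
    field_simp
  have hFnonneg : ∀ᶠ d : ℕ in atTop, 0 ≤ F d := by
    filter_upwards [eventually_ge_atTop 3, hlogd.eventually_gt_atTop 0] with d hd3 hld
    have ht3 : (0 : ℝ) ≤ (d : ℝ) := by positivity
    simp only [hFdef]
    positivity
  have hxX : ∀ᶠ d : ℕ in atTop, x d ≤ X d := by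
    filter_upwards [hdata, eventually_ge_atTop 3] with d hd hd3
    obtain ⟨h0, h1, hA1, hB1, hx1, hx0⟩ := hd
    have ht3 : (3 : ℝ) ≤ (d : ℝ) := by exact_mod_cast hd3
    have ht0 : (0 : ℝ) < (d : ℝ) - 2 := by linarith
    have hu1' : u d ^ (r - 1) ≤ 1 := pow_le_one₀ h0.le h1.le
    have hupos : (0 : ℝ) < u d ^ (r - 1) := by positivity
    have hpos1 : (0 : ℝ) < 1 + (r : ℝ) * ((d : ℝ) - 2) * u d ^ (r - 1) := by positivity
    have harg : (r : ℝ) * ((d : ℝ) - 2) * u d ^ (r - 1) ≤ (r : ℝ) * ((d : ℝ) - 2) := by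
      nlinarith [mul_pos hc0 ht0]
    have hlog : Real.log (1 + (r : ℝ) * ((d : ℝ) - 2) * u d ^ (r - 1)) ≤
        Real.log (1 + (r : ℝ) * ((d : ℝ) - 2)) := Real.log_le_log hpos1 (by linarith)
    have hBX := hB1.trans hlog
    simp only [hXdef]
    rw [le_div_iff₀ ht0]
    calc x d * ((d : ℝ) - 2) = ((d : ℝ) - 2) * x d := mul_comm _ _
      _ ≤ _ := hBX
  have hxUb : ∀ᶠ d : ℕ in atTop, x d ≤ Ub d := by
    filter_upwards [hdata, hxX, hXpos, eventually_ge_atTop 3] with d hd hxXd hXp hd3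
    obtain ⟨h0, h1, hA1, hB1, hx1, hx0⟩ := hd
    have ht3 : (3 : ℝ) ≤ (d : ℝ) := by exact_mod_cast hd3
    have ht0 : (0 : ℝ) < (d : ℝ) - 2 := by linarith
    have hbase : x d ^ ((1 : ℝ) / (r : ℝ)) = u d := by
      simp only [hxdef]
      rw [← Real.rpow_natCast (u d) r, ← Real.rpow_mul h0.le, mul_one_div,
        div_self (ne_of_gt hc0), Real.rpow_one]
    have hxe : u d ^ (r - 1) = x d ^ e := by
      rw [← hbase, ← Real.rpow_natCast (x d ^ ((1 : ℝ) / (r : ℝ))) (r - 1),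
        ← Real.rpow_mul (pow_nonneg h0.le r)]
      congr 1
      rw [hedef, Nat.cast_sub hr]
      push_cast
      field_simp
    have hXee : x d ^ e ≤ X d ^ e := Real.rpow_le_rpow hx0.le hxXd he0
    have harg : (r : ℝ) * ((d : ℝ) - 2) * u d ^ (r - 1) ≤ W d := by
      simp only [hWdef]
      rw [hxe]
      exact mul_le_mul_of_nonneg_left hXee (by positivity)
    have hupos : (0 : ℝ) < u d ^ (r - 1) := by positivity
    have hpos1 : (0 : ℝ) < 1 + (r : ℝ) * ((d : ℝ) - 2) * u d ^ (r - 1) := by positivity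
    have hlog : Real.log (1 + (r : ℝ) * ((d : ℝ) - 2) * u d ^ (r - 1)) ≤
        Real.log (1 + W d) := Real.log_le_log hpos1 (by linarith)
    have hBW := hB1.trans hlog
    simp only [hUbdef]
    rw [le_div_iff₀ ht0]
    calc x d * ((d : ℝ) - 2) = ((d : ℝ) - 2) * x d := mul_comm _ _
      _ ≤ _ := hBW
  have hLbx : ∀ᶠ d : ℕ in atTop, Lb d ≤ x d := by
    filter_upwards [hdata, hxX, hXpos, hXhalf, eventually_ge_atTop 3] with d hd hxXd hXp hXh hd3
    obtain ⟨h0, h1, hA1, hB1, hx1, hx0⟩ := hd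
    have ht3 : (3 : ℝ) ≤ (d : ℝ) := by exact_mod_cast hd3
    have ht1 : (0 : ℝ) < (d : ℝ) - 1 := by linarith
    have h1xpos : (0 : ℝ) < 1 - x d := by linarith
    have hmulA : (1 - x d) * (-Real.log (u d)) ≤ ((d : ℝ) - 1) * x d := by
      have h2 := mul_le_mul_of_nonneg_left hA1 h1xpos.le
      have e1 : (1 - x d) * (((d : ℝ) - 1) * x d / (1 - x d)) = ((d : ℝ) - 1) * x d := by
        field_simp
      linarith
    have hlogx : -Real.log (x d) = (r : ℝ) * (-Real.log (u d)) := by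
      simp only [hxdef]
      rw [Real.log_pow]
      ring
    have hcomp : (1 - X d) * (-Real.log (X d)) ≤ (1 - x d) * (-Real.log (x d)) := by
      apply mul_le_mul (by linarith) ?_ ?_ (by linarith)
      · have := Real.log_le_log hx0 hxXd
        linarith
      · have := Real.log_neg hXp (by linarith)
        linarith
    simp only [hLbdef]
    rw [div_le_iff₀ ht1]
    have h5 : (1 - x d) * (-Real.log (x d)) / (r : ℝ) ≤ ((d : ℝ) - 1) * x d := by
      rw [hlogx]
      calc (1 - x d) * ((r : ℝ) * (-Real.log (u d))) / (r : ℝ)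
          = (1 - x d) * (-Real.log (u d)) := by field_simp
        _ ≤ _ := hmulA
    have h6 : (1 - X d) * (-Real.log (X d)) / (r : ℝ) ≤
        (1 - x d) * (-Real.log (x d)) / (r : ℝ) := (div_le_div_iff_of_pos_right hc0).mpr hcomp
    calc (1 - X d) * (-Real.log (X d) / (r : ℝ))
        = (1 - X d) * (-Real.log (X d)) / (r : ℝ) := by ring
      _ ≤ ((d : ℝ) - 1) * x d := le_trans h6 h5
      _ = x d * ((d : ℝ) - 1) := mul_comm _ _
  have hmain : Tendsto (fun d : ℕ => x d * F d) atTop (nhds 1) := by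
    refine tendsto_of_tendsto_of_tendsto_of_le_of_le' T1 T2 ?_ ?_
    · filter_upwards [hLbx, hFnonneg] with d h hF
      exact mul_le_mul_of_nonneg_right h hF
    · filter_upwards [hxUb, hFnonneg] with d h hF
      exact mul_le_mul_of_nonneg_right h hF
  have hfin := hmain.rpow_const (p := (1 : ℝ) / (r : ℝ)) (Or.inr (by positivity))
  rw [Real.one_rpow] at hfin
  refine Tendsto.congr' ?_ hfin
  filter_upwards [hdata, hlogd.eventually_gt_atTop 0, eventually_ge_atTop 3] with d hd hld hd3
  obtain ⟨h0, h1, hA1, hB1, hx1, hx0⟩ := hd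
  have hF0 : 0 ≤ F d := by
    simp only [hFdef]
    positivity
  have hbase : x d ^ ((1 : ℝ) / (r : ℝ)) = u d := by
    simp only [hxdef]
    rw [← Real.rpow_natCast (u d) r, ← Real.rpow_mul h0.le, mul_one_div,
      div_self (ne_of_gt hc0), Real.rpow_one]
  rw [Real.mul_rpow hx0.le hF0, hbase]
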